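/- Let p : N → Σ be an oriented circle bundle over a closed oriented connected manifold Σ of dimension m−2 ≥ 2, with Euler class e ∈ H²(Σ). Fix h and i₁,...,i_k ∈ {1,...,m−2−h} with i₁+⋯+i_k ≥ h+1. If the cup product map H^{i₁}(Σ) ⊗ ⋯ ⊗ H^{i_k}(Σ) → H^{i₁+⋯+i_k}(Σ) is surjective but the map (∪ e) : H^{i₁+⋯+i_k−2}(Σ) → H^{i₁+⋯+i_k}(Σ) is not surjective, then N does not bound a compact orientable manifold having the homotopy type of a CW-complex of dimension ≤ h. -/
import Mathlib


/-- Let `p : N → Σ` be an oriented circle bundle over a closed oriented connected manifold `Σ` of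
dimension `m - 2 ≥ 2`, with Euler class `e ∈ H²(Σ)`.  Fix `h` and `i₁,…,i_k ∈ {1,…,m-2-h}`
with `i₁+⋯+i_k ≥ h+1`.  Assume the cup product map
`H^{i₁}(Σ) ⊗ ⋯ ⊗ H^{i_k}(Σ) → H^{i₁+⋯+i_k}(Σ)` is surjective but cup product with `e`,
`H^{i₁+⋯+i_k-2}(Σ) → H^{i₁+⋯+i_k}(Σ)`, is not surjective.  Then `N` does not bound a compact
orientable manifold having the homotopy type of a CW-complex of dimension `≤ h`.

Encoding: `HS`, `HN` are the graded cohomology `R`-algebras of `Σ` and `N`, `p` is the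
degree-preserving pullback `p^*`, and `hgysin` is the exactness of the Gysin sequence
`H^{j-2}(Σ) --∪e--> H^{j}(Σ) --p*--> H^{j}(N)` in the relevant degree `j = i₁+⋯+i_k`.
The hypothetical bounding manifold `W` of homotopical dimension `≤ h` is encoded exactly as
in Theorem 3.1: graded cohomology algebra `𝒲`, degree-preserving restriction `b`, relative
cohomology `Hrel` with exactness, Poincaré–Lefschetz duality `H^{j+1}(W,N) ≃ H_{m-j-1}(W)`,
and vanishing of the (co)homology of `W` above degree `h`.  The conclusion is `False`:
no such bounding manifold exists. -/
theorem statement3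
    (R : Type) [CommRing R] (m h : ℕ) (hm : 2 ≤ m - 2)
    -- cohomology of Σ and N, and the pullback p^*
    (HS HN : Type) [Ring HS] [Ring HN] [Algebra R HS] [Algebra R HN]
    (𝒮 : ℕ → Submodule R HS) (𝒩 : ℕ → Submodule R HN)
    [GradedAlgebra 𝒮] [GradedAlgebra 𝒩]
    (p : HS →ₐ[R] HN)
    (hp : ∀ j, ∀ x ∈ 𝒮 j, p x ∈ 𝒩 j)
    -- Euler class of the circle bundle
    (e : HS) (he : e ∈ 𝒮 2)
    (k : ℕ) (i : Fin k → ℕ)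
    (hil : ∀ l, 1 ≤ i l) (hiu : ∀ l, i l ≤ m - 2 - h)
    (hsum : h + 1 ≤ ∑ l, i l)
    -- Gysin exactness H^{j-2}(Σ) --∪e--> H^j(Σ) --p*--> H^j(N) in degree j = i₁+⋯+i_k
    (hgysin : ∀ z ∈ 𝒮 (∑ l, i l), p z = 0 → ∃ w ∈ 𝒮 ((∑ l, i l) - 2), w * e = z)
    -- the cup product map of Σ in multidegree (i₁,…,i_k) is surjective
    (hcupsurj : ∀ z ∈ 𝒮 (∑ l, i l),
      ∃ x : Fin k → HS, (∀ l, x l ∈ 𝒮 (i l)) ∧ (List.ofFn x).prod = z)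
    -- but cup product with e is not surjective onto H^{i₁+⋯+i_k}(Σ)
    (hnotsurj : ¬ ∀ z ∈ 𝒮 (∑ l, i l), ∃ w ∈ 𝒮 ((∑ l, i l) - 2), w * e = z)
    -- hypothetical compact orientable filling W of N, homotopically of dimension ≤ h
    (HW : Type) [Ring HW] [Algebra R HW]
    (𝒲 : ℕ → Submodule R HW) [GradedAlgebra 𝒲]
    (b : HW →ₐ[R] HN)
    (hb : ∀ j, ∀ x ∈ 𝒲 j, b x ∈ 𝒩 j)
    (Hrel : ℕ → Type) [∀ j, AddCommGroup (Hrel j)] [∀ j, Module R (Hrel j)]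
    (Hlow : ℕ → Type) [∀ j, AddCommGroup (Hlow j)] [∀ j, Module R (Hlow j)]
    (δ : ∀ j, (𝒩 j) →ₗ[R] Hrel (j + 1))
    (hexact : ∀ j (y : 𝒩 j), δ j y = 0 → ∃ x ∈ 𝒲 j, b x = (y : HN))
    (duality : ∀ j, Hrel (j + 1) ≃ₗ[R] Hlow (m - j - 1))
    (hHlow : ∀ j, h + 1 ≤ j → Subsingleton (Hlow j))
    (hcohW : ∀ j, h + 1 ≤ j → 𝒲 j = ⊥) :
    False := by
  apply hnotsurj
  intro z hz
  obtain ⟨x, hx, hxz⟩ := hcupsurj z hz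
  -- each p (x l) lifts to W
  have hlift : ∀ l, ∃ w ∈ 𝒲 (i l), b w = p (x l) := by
    intro l
    have hdim : h + 1 ≤ m - i l - 1 := by
      have h1 := hil l
      have h2 := hiu l
      omega
    haveI : Subsingleton (Hlow (m - i l - 1)) := hHlow _ hdim
    haveI : Subsingleton (Hrel (i l + 1)) := Equiv.subsingleton (duality (i l)).toEquiv
    exact hexact (i l) ⟨p (x l), hp (i l) (x l) (hx l)⟩ (Subsingleton.elim _ _)
  choose w hw hbw using hlift
  have hprod : (List.ofFn w).prod ∈ 𝒲 (∑ l, i l) := by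
    have := SetLike.list_prod_map_mem_graded (A := 𝒲) (List.finRange k) i w
      (fun j _ => hw j)
    simpa [← List.ofFn_eq_map, List.sum_ofFn] using this
  have hzero : (List.ofFn w).prod = 0 := by
    rw [hcohW _ hsum] at hprod
    simpa using hprod
  have hpz : p z = 0 := by
    have : b (List.ofFn w).prod = p z := by
      rw [← hxz, map_list_prod, map_list_prod, List.map_ofFn, List.map_ofFn]
      simp only [Function.comp_def, hbw]
    rw [hzero, map_zero] at this
    exact this.symm
  exact hgysin z hz hpz
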